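/- Fix an integer s ≥ 1 and consider the box A = [−⌊q^{−s}⌋, ⌊q^{−s}⌋]² in ℤ². Assign each vertex of A state 2 independently with probability q and state 1 otherwise, and run threshold-2 bootstrap percolation of 2s on 1s internal to A. Then there is a constant c_0 = c_0(s) such that for all small q, with probability at least 1 − c_0·q^s, every maximal connected set of state-2 vertices in the final configuration has ℓ∞-diameter at most 16s. -/

import Mathlib

open MeasureTheory ProbabilityTheory

/-- The four nearest neighbors of a vertex of `ℤ²`. -/
def neighbors (v : ℤ × ℤ) : List (ℤ × ℤ) :=
  [(v.1 + 1, v.2), (v.1 - 1, v.2), (v.1, v.2 + 1), (v.1, v.2 - 1)]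

/-- One step of threshold-2 bootstrap percolation of 2s (`true`) on 1s (`false`),
internal to the finite region `B`. -/
def bstep (B : Finset (ℤ × ℤ)) (σ : ℤ × ℤ → Bool) : ℤ × ℤ → Bool := fun v =>
  σ v || (decide (v ∈ B) &&
    decide (2 ≤ (neighbors v).countP (fun w => decide (w ∈ B) && σ w)))

/-- The final configuration of the internal bootstrap dynamics on `B`. -/
def bfinal (B : Finset (ℤ × ℤ)) (σ : ℤ × ℤ → Bool) : ℤ × ℤ → Bool :=
  (bstep B)^[B.card + 1] σ

/-- Nearest-neighbor adjacency in `ℤ²`. -/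
def Adj (u v : ℤ × ℤ) : Prop := (u.1 - v.1).natAbs + (u.2 - v.2).natAbs = 1

/-- A finite set is connected for nearest-neighbor adjacency. -/
def ConnectedIn (C : Finset (ℤ × ℤ)) : Prop :=
  ∀ u ∈ C, ∀ v ∈ C, ∃ l : List (ℤ × ℤ), (∀ w ∈ l, w ∈ C) ∧ List.Chain Adj u l ∧
    (u :: l).getLast (by simp) = v

/-- The box `[-⌊q^{-s}⌋, ⌊q^{-s}⌋]²`. -/
noncomputable def boxA (s : ℕ) (q : ℝ) : Finset (ℤ × ℤ) :=
  Finset.Icc (-⌊q⁻¹ ^ s⌋, -⌊q⁻¹ ^ s⌋) (⌊q⁻¹ ^ s⌋, ⌊q⁻¹ ^ s⌋)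

namespace BP

def d1 (u v : ℤ × ℤ) : ℕ := (u.1 - v.1).natAbs + (u.2 - v.2).natAbs

lemma mem_neighbors {w v : ℤ × ℤ} : w ∈ neighbors v ↔ d1 w v = 1 := by
  constructor
  · intro h
    simp only [neighbors, List.mem_cons, List.mem_singleton, List.not_mem_nil, or_false] at h
    rcases h with h | h | h | h <;> subst h <;> simp [d1] <;> omega
  · intro h
    have h1 : ¬ (w.1 = v.1 ∧ w.2 = v.2) ∨ True := Or.inr trivial
    simp only [d1] at h
    have : (w.1 = v.1 + 1 ∧ w.2 = v.2) ∨ (w.1 = v.1 - 1 ∧ w.2 = v.2) ∨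
        (w.1 = v.1 ∧ w.2 = v.2 + 1) ∨ (w.1 = v.1 ∧ w.2 = v.2 - 1) := by omega
    simp only [neighbors, List.mem_cons, List.mem_singleton, List.not_mem_nil, or_false]
    rcases this with ⟨h1, h2⟩ | ⟨h1, h2⟩ | ⟨h1, h2⟩ | ⟨h1, h2⟩
    · exact Or.inl (Prod.ext h1 h2)
    · exact Or.inr (Or.inl (Prod.ext h1 h2))
    · exact Or.inr (Or.inr (Or.inl (Prod.ext h1 h2)))
    · exact Or.inr (Or.inr (Or.inr (Prod.ext h1 h2)))

lemma d1_comm (u v : ℤ × ℤ) : d1 u v = d1 v u := by simp [d1]; omega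

lemma neighbors_nodup (v : ℤ × ℤ) : (neighbors v).Nodup := by
  simp [neighbors, Prod.ext_iff]
  omega

lemma two_le_countP {l : List (ℤ × ℤ)} (hl : l.Nodup) {p : ℤ × ℤ → Bool} {a b : ℤ × ℤ}
    (ha : a ∈ l) (hb : b ∈ l) (hab : a ≠ b) (hpa : p a = true) (hpb : p b = true) :
    2 ≤ l.countP p := by
  have hsub : [a, b] ⊆ l := by intro x hx; simp at hx; rcases hx with h | h <;> subst h <;> assumption
  have hnd : ([a, b] : List (ℤ × ℤ)).Nodup := by simp [hab]
  have hsp : ([a, b] : List (ℤ × ℤ)).Subperm l := (List.subperm_of_subset hnd hsub)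
  calc 2 = ([a,b] : List (ℤ × ℤ)).countP p := by simp [List.countP_cons, hpa, hpb]
  _ ≤ l.countP p := hsp.countP_le p

lemma countP_two_exists {l : List (ℤ × ℤ)} (hl : l.Nodup) {p : ℤ × ℤ → Bool}
    (h : 2 ≤ l.countP p) : ∃ a ∈ l, ∃ b ∈ l, a ≠ b ∧ p a = true ∧ p b = true := by
  induction l with
  | nil => simp at h
  | cons c t ih =>
    rcases List.nodup_cons.mp hl with ⟨hc, ht⟩
    rw [List.countP_cons] at h
    by_cases hpc : p c = true
    · simp only [hpc, if_true] at h
      have h1 : 0 < t.countP p := by omega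
      obtain ⟨b, hb, hpb⟩ := List.countP_pos_iff.mp h1
      exact ⟨c, by simp, b, by simp [hb], fun he => hc (he ▸ hb), hpc, hpb⟩
    · simp only [hpc, if_false, Bool.false_eq_true] at h
      obtain ⟨a, ha, b, hb, hab, hpa, hpb⟩ := ih ht h
      exact ⟨a, by simp [ha], b, by simp [hb], hab, hpa, hpb⟩




variable {B : Finset (ℤ × ℤ)} {σ τ : ℤ × ℤ → Bool}

def Infd (B : Finset (ℤ × ℤ)) (σ : ℤ × ℤ → Bool) (v : ℤ × ℤ) : Prop := bfinal B σ v = true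

lemma bstep_of_self {v} (h : σ v = true) : bstep B σ v = true := by simp [bstep, h]

lemma bstep_mono (h : ∀ v, σ v = true → τ v = true) :
    ∀ v, bstep B σ v = true → bstep B τ v = true := by
  intro v hv
  simp only [bstep, Bool.or_eq_true, Bool.and_eq_true, decide_eq_true_eq] at hv ⊢
  rcases hv with hv | ⟨hvB, hc⟩
  · exact Or.inl (h v hv)
  · refine Or.inr ⟨hvB, le_trans hc (List.countP_mono_left ?_)⟩
    intro w hw hp
    simp only [Bool.and_eq_true, decide_eq_true_eq] at hp ⊢
    exact ⟨hp.1, h w hp.2⟩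

lemma iterate_mono (h : ∀ v, σ v = true → τ v = true) :
    ∀ n v, (bstep B)^[n] σ v = true → (bstep B)^[n] τ v = true := by
  intro n
  induction n with
  | zero => exact h
  | succ n ih =>
    intro v hv
    rw [Function.iterate_succ_apply'] at hv ⊢
    exact bstep_mono ih v hv

lemma iterate_le_succ : ∀ n v, (bstep B)^[n] σ v = true → (bstep B)^[n+1] σ v = true := by
  intro n v hv
  rw [Function.iterate_succ_apply']
  exact bstep_of_self hv

lemma iterate_le {m n : ℕ} (h : m ≤ n) {v} (hv : (bstep B)^[m] σ v = true) :
    (bstep B)^[n] σ v = true := by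
  induction n with
  | zero => simpa [Nat.le_zero.mp h] using hv
  | succ n ih =>
    rcases Nat.lt_or_ge m (n+1) with h' | h'
    · exact iterate_le_succ n v (ih (by omega))
    · have : m = n + 1 := by omega
      subst this; exact hv

lemma iterate_out {v} (hv : v ∉ B) : ∀ n, (bstep B)^[n] σ v = σ v := by
  intro n
  induction n with
  | zero => rfl
  | succ n ih =>
    rw [Function.iterate_succ_apply', bstep]
    simp [hv, ih]

/-- the filter of infected sites in `B` after `n` steps -/
private def FS (B : Finset (ℤ × ℤ)) (σ : ℤ × ℤ → Bool) (n : ℕ) : Finset (ℤ × ℤ) :=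
  B.filter (fun v => (bstep B)^[n] σ v = true)

lemma exists_stab : ∃ m ≤ B.card, (bstep B)^[m+1] σ = (bstep B)^[m] σ := by
  by_contra hcon
  push_neg at hcon
  -- each step strictly increases FS
  have hstrict : ∀ m ≤ B.card, FS B σ m ⊂ FS B σ (m+1) := by
    intro m hm
    have hne := hcon m hm
    have hmono : FS B σ m ⊆ FS B σ (m+1) := by
      intro v hv
      simp only [FS, Finset.mem_filter] at hv ⊢
      exact ⟨hv.1, iterate_le_succ m v hv.2⟩
    refine ⟨hmono, ?_⟩
    intro hsub
    apply hne
    funext v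
    by_cases hvB : v ∈ B
    · have h1 : (bstep B)^[m] σ v = true → (bstep B)^[m+1] σ v = true := iterate_le_succ m v
      have h2 : (bstep B)^[m+1] σ v = true → (bstep B)^[m] σ v = true := by
        intro h
        have hmem : v ∈ FS B σ (m+1) := Finset.mem_filter.mpr ⟨hvB, h⟩
        exact (Finset.mem_filter.mp (hsub hmem)).2
      rw [Bool.eq_iff_iff]
      exact ⟨h2, h1⟩
    · rw [iterate_out hvB, iterate_out hvB]
  have hcard : ∀ m ≤ B.card + 1, m ≤ (FS B σ m).card := by
    intro m
    induction m with
    | zero => omega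
    | succ m ih =>
      intro hm
      have h1 := ih (by omega)
      have h2 := Finset.card_lt_card (hstrict m (by omega))
      omega
  have h3 := hcard (B.card + 1) le_rfl
  have h4 : (FS B σ (B.card + 1)).card ≤ B.card := Finset.card_le_card (Finset.filter_subset _ _)
  omega

lemma iterate_stab_ge {m : ℕ} (hstab : (bstep B)^[m+1] σ = (bstep B)^[m] σ) :
    ∀ n, m ≤ n → (bstep B)^[n] σ = (bstep B)^[m] σ := by
  intro n hn
  induction n with
  | zero => rw [Nat.le_zero.mp hn]
  | succ n ih =>
    rcases Nat.lt_or_ge m (n+1) with h' | h'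
    · have hih := ih (by omega)
      have hs2 : bstep B ((bstep B)^[m] σ) = (bstep B)^[m+1] σ :=
        (Function.iterate_succ_apply' (bstep B) m σ).symm
      rw [Function.iterate_succ_apply', hih, hs2, hstab]
    · have : m = n + 1 := by omega
      rw [this]

lemma bstep_bfinal : bstep B (bfinal B σ) = bfinal B σ := by
  obtain ⟨m, hm, hstab⟩ := exists_stab (B := B) (σ := σ)
  have h1 : bfinal B σ = (bstep B)^[m] σ := iterate_stab_ge hstab (B.card + 1) (by omega)
  rw [bfinal] at h1 ⊢
  have hs2 : bstep B ((bstep B)^[m] σ) = (bstep B)^[m+1] σ :=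
    (Function.iterate_succ_apply' (bstep B) m σ).symm
  rw [h1, hs2, hstab]

lemma infd_of_start {v} (h : σ v = true) : Infd B σ v := by
  unfold Infd bfinal
  exact iterate_le (Nat.zero_le _) h

lemma infd_of_two {v w1 w2 : ℤ × ℤ} (hv : v ∈ B) (h12 : w1 ≠ w2)
    (h1 : w1 ∈ neighbors v) (h2 : w2 ∈ neighbors v) (h1B : w1 ∈ B) (h2B : w2 ∈ B)
    (hI1 : Infd B σ w1) (hI2 : Infd B σ w2) : Infd B σ v := by
  have := congrFun (bstep_bfinal (B := B) (σ := σ)) v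
  rw [Infd, ← this, bstep]
  simp only [Bool.or_eq_true, Bool.and_eq_true, decide_eq_true_eq]
  refine Or.inr ⟨hv, two_le_countP (neighbors_nodup v) h1 h2 h12 ?_ ?_⟩
  · simp only [Bool.and_eq_true, decide_eq_true_eq]; exact ⟨h1B, hI1⟩
  · simp only [Bool.and_eq_true, decide_eq_true_eq]; exact ⟨h2B, hI2⟩

lemma infd_induction (P : ℤ × ℤ → Prop) (hbase : ∀ v, σ v = true → P v)
    (hstep : ∀ v ∈ B, ∀ w1 w2 : ℤ × ℤ, w1 ≠ w2 → w1 ∈ neighbors v → w2 ∈ neighbors v →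
      w1 ∈ B → w2 ∈ B → P w1 → P w2 → P v) :
    ∀ v, Infd B σ v → P v := by
  have key : ∀ n v, (bstep B)^[n] σ v = true → P v := by
    intro n
    induction n with
    | zero => exact hbase
    | succ n ih =>
      intro v hv
      rw [Function.iterate_succ_apply', bstep] at hv
      simp only [Bool.or_eq_true, Bool.and_eq_true, decide_eq_true_eq] at hv
      rcases hv with hv | ⟨hvB, hc⟩
      · exact ih v hv
      · obtain ⟨a, ha, b, hb, hab, hpa, hpb⟩ := countP_two_exists (neighbors_nodup v) hc
        simp only [Bool.and_eq_true, decide_eq_true_eq] at hpa hpb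
        exact hstep v hvB a b hab ha hb hpa.1 hpb.1 (ih a hpa.2) (ih b hpb.2)
  intro v hv
  exact key (B.card + 1) v hv

lemma infd_mono (h : ∀ v, σ v = true → τ v = true) : ∀ v, Infd B σ v → Infd B τ v := by
  apply infd_induction
  · intro v hv; exact infd_of_start (h v hv)
  · intro v hvB w1 w2 h12 h1 h2 h1B h2B hw1 hw2
    exact infd_of_two hvB h12 h1 h2 h1B h2B hw1 hw2



/-- Abstract closure property: region predicate `Bp`, infected predicate `I`. -/
def Clo (Bp I : ℤ × ℤ → Prop) : Prop :=
  ∀ v, Bp v → ∀ w1 w2 : ℤ × ℤ, w1 ≠ w2 → d1 w1 v = 1 → d1 w2 v = 1 →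
    Bp w1 → Bp w2 → I w1 → I w2 → I v

lemma d1_mk (a b c d : ℤ) : d1 (a, b) (c, d) = (a - c).natAbs + (b - d).natAbs := rfl

lemma clo_swap {Bp I} (h : Clo Bp I) :
    Clo (fun w => Bp (w.2, w.1)) (fun w => I (w.2, w.1)) := by
  intro v hv w1 w2 hne hd1 hd2 hb1 hb2 hi1 hi2
  refine h (v.2, v.1) hv (w1.2, w1.1) (w2.2, w2.1) ?_ ?_ ?_ hb1 hb2 hi1 hi2
  · intro he; apply hne; rw [Prod.mk.injEq] at he; exact Prod.ext he.2 he.1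
  · rw [d1_mk]; rw [d1] at hd1; omega
  · rw [d1_mk]; rw [d1] at hd2; omega

lemma clo_negx {Bp I} (h : Clo Bp I) :
    Clo (fun w => Bp (-w.1, w.2)) (fun w => I (-w.1, w.2)) := by
  intro v hv w1 w2 hne hd1 hd2 hb1 hb2 hi1 hi2
  refine h (-v.1, v.2) hv (-w1.1, w1.2) (-w2.1, w2.2) ?_ ?_ ?_ hb1 hb2 hi1 hi2
  · intro he; apply hne; rw [Prod.mk.injEq] at he
    exact Prod.ext (by omega) he.2
  · rw [d1_mk]; rw [d1] at hd1; omega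
  · rw [d1_mk]; rw [d1] at hd2; omega

lemma clo_negy {Bp I} (h : Clo Bp I) :
    Clo (fun w => Bp (w.1, -w.2)) (fun w => I (w.1, -w.2)) := by
  intro v hv w1 w2 hne hd1 hd2 hb1 hb2 hi1 hi2
  refine h (v.1, -v.2) hv (w1.1, -w1.2) (w2.1, -w2.2) ?_ ?_ ?_ hb1 hb2 hi1 hi2
  · intro he; apply hne; rw [Prod.mk.injEq] at he
    exact Prod.ext he.1 (by omega)
  · rw [d1_mk]; rw [d1] at hd1; omega
  · rw [d1_mk]; rw [d1] at hd2; omega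

/-- Fill a row from an anchor, supported by a fully infected adjacent row. -/
lemma fill_row {Bp I : ℤ × ℤ → Prop} (h : Clo Bp I) (x0 x1 xa y ys : ℤ)
    (hys : (y - ys).natAbs = 1) (hxa0 : x0 ≤ xa) (hxa1 : xa ≤ x1)
    (hB : ∀ x, x0 ≤ x → x ≤ x1 → Bp (x, y))
    (hBs : ∀ x, x0 ≤ x → x ≤ x1 → Bp (x, ys))
    (hsup : ∀ x, x0 ≤ x → x ≤ x1 → I (x, ys))
    (h0 : I (xa, y)) :
    ∀ x, x0 ≤ x → x ≤ x1 → I (x, y) := by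
  have hup : ∀ x : ℤ, xa ≤ x → x ≤ x1 → I (x, y) := by
    have := Int.le_induction (motive := fun x _ => x ≤ x1 → I (x, y)) (m := xa)
      (fun _ => h0) ?_
    · exact fun x hx => this x hx
    · intro n hn ih hn1
      refine h (n + 1, y) (hB _ (by omega) hn1) (n, y) (n + 1, ys) ?_ ?_ ?_
        (hB _ (by omega) (by omega)) (hBs _ (by omega) hn1) (ih (by omega))
        (hsup _ (by omega) hn1)
      · intro he; rw [Prod.mk.injEq] at he; omega
      · rw [d1_mk]; omega
      · rw [d1_mk]; omega
  have hdn : ∀ x : ℤ, x ≤ xa → x0 ≤ x → I (x, y) := by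
    have := Int.le_induction_down (motive := fun x _ => x0 ≤ x → I (x, y)) (m := xa)
      (fun _ => h0) ?_
    · exact fun x hx => this x hx
    · intro n hn ih hn1
      refine h (n - 1, y) (hB _ hn1 (by omega)) (n, y) (n - 1, ys) ?_ ?_ ?_
        (hB _ (by omega) (by omega)) (hBs _ hn1 (by omega)) (ih (by omega))
        (hsup _ hn1 (by omega))
      · intro he; rw [Prod.mk.injEq] at he; omega
      · rw [d1_mk]; omega
      · rw [d1_mk]; omega
  intro x hx0 hx1
  rcases le_total x xa with hc | hc
  · exact hdn x hc hx0
  · exact hup x hc hx1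

/-- Grow a full-width strip upward using a flanking filled column range. -/
lemma grow_up {Bp I : ℤ × ℤ → Prop} (h : Clo Bp I) (x0 x1 xa0 xa1 y0 y1 y2 : ℤ)
    (hx0 : x0 ≤ xa0) (hxa : xa0 ≤ xa1) (hx1 : xa1 ≤ x1) (hy0 : y0 ≤ y1) (hy12 : y1 ≤ y2)
    (hstrip : ∀ x, x0 ≤ x → x ≤ x1 → ∀ y, y0 ≤ y → y ≤ y1 → I (x, y))
    (hflank : ∀ x, xa0 ≤ x → x ≤ xa1 → ∀ y, y1 ≤ y → y ≤ y2 → I (x, y))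
    (hB : ∀ x, x0 ≤ x → x ≤ x1 → ∀ y, y0 ≤ y → y ≤ y2 → Bp (x, y)) :
    ∀ y, y1 ≤ y → y ≤ y2 → ∀ x, x0 ≤ x → x ≤ x1 → I (x, y) := by
  have key := Int.le_induction
      (motive := fun y _ => y ≤ y2 → ∀ x, x0 ≤ x → x ≤ x1 → I (x, y)) (m := y1)
      (fun _ x hxx0 hxx1 => hstrip x hxx0 hxx1 y1 hy0 le_rfl) ?_
  · exact fun y hy a => key y hy a
  · intro n hn ih hn2
    refine fill_row h x0 x1 xa0 (n + 1) n (by omega) hx0 (by omega)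
      (fun x a b => hB x a b (n+1) (by omega) hn2)
      (fun x a b => hB x a b n (by omega) (by omega))
      (fun x a b => ih (by omega) x a b)
      (hflank xa0 le_rfl hxa (n + 1) (by omega) hn2)

/-- Grow a full-width strip downward using a flanking filled column range. -/
lemma grow_down {Bp I : ℤ × ℤ → Prop} (h : Clo Bp I) (x0 x1 xa0 xa1 y0 y1 y2 : ℤ)
    (hx0 : x0 ≤ xa0) (hxa : xa0 ≤ xa1) (hx1 : xa1 ≤ x1) (hy0 : y0 ≤ y1) (hy12 : y1 ≤ y2)
    (hstrip : ∀ x, x0 ≤ x → x ≤ x1 → ∀ y, y1 ≤ y → y ≤ y2 → I (x, y))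
    (hflank : ∀ x, xa0 ≤ x → x ≤ xa1 → ∀ y, y0 ≤ y → y ≤ y1 → I (x, y))
    (hB : ∀ x, x0 ≤ x → x ≤ x1 → ∀ y, y0 ≤ y → y ≤ y2 → Bp (x, y)) :
    ∀ y, y0 ≤ y → y ≤ y1 → ∀ x, x0 ≤ x → x ≤ x1 → I (x, y) := by
  have key : ∀ y : ℤ, y ≤ y1 → y0 ≤ y → ∀ x, x0 ≤ x → x ≤ x1 → I (x, y) := by
    have key := Int.le_induction_down
        (motive := fun y _ => y0 ≤ y → ∀ x, x0 ≤ x → x ≤ x1 → I (x, y)) (m := y1)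
        (fun _ x hxx0 hxx1 => hstrip x hxx0 hxx1 y1 le_rfl hy12) ?_
    · exact fun y hy a => key y hy a
    · intro n hn ih hn2
      refine fill_row h x0 x1 xa0 (n - 1) n (by omega) hx0 (by omega)
        (fun x a b => hB x a b (n-1) hn2 (by omega))
        (fun x a b => hB x a b n (by omega) (by omega))
        (fun x a b => ih (by omega) x a b)
        (hflank xa0 le_rfl hxa (n - 1) hn2 (by omega))
  intro y a b x c d
  exact key y b a x c d

/-- Merging two filled rectangles whose `y`-ranges overlap and whose `x`-ranges are
within reach fills the bounding rectangle. -/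
lemma mergeA {Bp I : ℤ × ℤ → Prop} (h : Clo Bp I) (ax1 ax2 ay1 ay2 bx1 bx2 by1 by2 : ℤ)
    (hax : ax1 ≤ ax2) (hay : ay1 ≤ ay2) (hbx : bx1 ≤ bx2) (hby : by1 ≤ by2)
    (hyov : max ay1 by1 ≤ min ay2 by2)
    (hr1 : bx1 ≤ ax2 + 2) (hr2 : ax1 ≤ bx2 + 2)
    (hIa : ∀ x y, ax1 ≤ x → x ≤ ax2 → ay1 ≤ y → y ≤ ay2 → I (x, y))
    (hIb : ∀ x y, bx1 ≤ x → x ≤ bx2 → by1 ≤ y → y ≤ by2 → I (x, y))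
    (hB : ∀ x y, min ax1 bx1 ≤ x → x ≤ max ax2 bx2 → min ay1 by1 ≤ y → y ≤ max ay2 by2 →
      Bp (x, y)) :
    ∀ x y, min ax1 bx1 ≤ x → x ≤ max ax2 bx2 → min ay1 by1 ≤ y → y ≤ max ay2 by2 →
      I (x, y) := by
  set yl := max ay1 by1 with hyl
  set yh := min ay2 by2 with hyh
  -- step 1 : the strip
  have hstrip : ∀ x, min ax1 bx1 ≤ x → x ≤ max ax2 bx2 → ∀ y, yl ≤ y → y ≤ yh → I (x, y) := by
    intro x hx1 hx2 y hy1 hy2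
    by_cases hA : ax1 ≤ x ∧ x ≤ ax2
    · exact hIa x y hA.1 hA.2 (by omega) (by omega)
    by_cases hBc : bx1 ≤ x ∧ x ≤ bx2
    · exact hIb x y hBc.1 hBc.2 (by omega) (by omega)
    -- x is in a gap of width one
    have hgap : (x = ax2 + 1 ∧ x = bx1 - 1) ∨ (x = bx2 + 1 ∧ x = ax1 - 1) := by omega
    rcases hgap with ⟨hg1, hg2⟩ | ⟨hg1, hg2⟩
    · refine h (x, y) (hB x y hx1 hx2 (by omega) (by omega)) (x - 1, y) (x + 1, y) ?_ ?_ ?_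
        (hB _ _ (by omega) (by omega) (by omega) (by omega))
        (hB _ _ (by omega) (by omega) (by omega) (by omega))
        (hIa _ _ (by omega) (by omega) (by omega) (by omega))
        (hIb _ _ (by omega) (by omega) (by omega) (by omega))
      · intro he; rw [Prod.mk.injEq] at he; omega
      · rw [d1_mk]; omega
      · rw [d1_mk]; omega
    · refine h (x, y) (hB x y hx1 hx2 (by omega) (by omega)) (x - 1, y) (x + 1, y) ?_ ?_ ?_
        (hB _ _ (by omega) (by omega) (by omega) (by omega))
        (hB _ _ (by omega) (by omega) (by omega) (by omega))
        (hIb _ _ (by omega) (by omega) (by omega) (by omega))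
        (hIa _ _ (by omega) (by omega) (by omega) (by omega))
      · intro he; rw [Prod.mk.injEq] at he; omega
      · rw [d1_mk]; omega
      · rw [d1_mk]; omega
  -- step 2 : grow upward
  have hup : ∀ y, yh ≤ y → y ≤ max ay2 by2 → ∀ x, min ax1 bx1 ≤ x → x ≤ max ax2 bx2 →
      I (x, y) := by
    rcases le_total by2 ay2 with hc | hc
    · refine grow_up h (min ax1 bx1) (max ax2 bx2) ax1 ax2 yl yh (max ay2 by2)
        (by omega) hax (by omega) (by omega) (by omega) hstrip ?_ ?_
      · intro x a b y c d; exact hIa x y a b (by omega) (by omega)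
      · intro x a b y c d; exact hB x y a b (by omega) (by omega)
    · refine grow_up h (min ax1 bx1) (max ax2 bx2) bx1 bx2 yl yh (max ay2 by2)
        (by omega) hbx (by omega) (by omega) (by omega) hstrip ?_ ?_
      · intro x a b y c d; exact hIb x y a b (by omega) (by omega)
      · intro x a b y c d; exact hB x y a b (by omega) (by omega)
  -- step 3 : grow downward
  have hdn : ∀ y, min ay1 by1 ≤ y → y ≤ yl → ∀ x, min ax1 bx1 ≤ x → x ≤ max ax2 bx2 →
      I (x, y) := by
    rcases le_total ay1 by1 with hc | hc
    · refine grow_down h (min ax1 bx1) (max ax2 bx2) ax1 ax2 (min ay1 by1) yl yh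
        (by omega) hax (by omega) (by omega) (by omega) hstrip ?_ ?_
      · intro x a b y c d; exact hIa x y a b (by omega) (by omega)
      · intro x a b y c d; exact hB x y a b (by omega) (by omega)
    · refine grow_down h (min ax1 bx1) (max ax2 bx2) bx1 bx2 (min ay1 by1) yl yh
        (by omega) hbx (by omega) (by omega) (by omega) hstrip ?_ ?_
      · intro x a b y c d; exact hIb x y a b (by omega) (by omega)
      · intro x a b y c d; exact hB x y a b (by omega) (by omega)
  intro x y hx1 hx2 hy1 hy2
  rcases lt_or_ge y yl with hc | hc
  · exact hdn y hy1 (by omega) x hx1 hx2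
  rcases le_or_gt y yh with hc2 | hc2
  · exact hstrip x hx1 hx2 y hc hc2
  · exact hup y (by omega) hy2 x hx1 hx2



/-- Diagonal corner-touching merge, second rectangle to the upper right. -/
lemma mergeC_ur {Bp I : ℤ × ℤ → Prop} (h : Clo Bp I) (ax1 ax2 ay1 ay2 bx1 bx2 by1 by2 : ℤ)
    (hax : ax1 ≤ ax2) (hay : ay1 ≤ ay2) (hbx : bx1 ≤ bx2) (hby : by1 ≤ by2)
    (hd1 : bx1 = ax2 + 1) (hd2 : by1 = ay2 + 1)
    (hIa : ∀ x y, ax1 ≤ x → x ≤ ax2 → ay1 ≤ y → y ≤ ay2 → I (x, y))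
    (hIb : ∀ x y, bx1 ≤ x → x ≤ bx2 → by1 ≤ y → y ≤ by2 → I (x, y))
    (hB : ∀ x y, min ax1 bx1 ≤ x → x ≤ max ax2 bx2 → min ay1 by1 ≤ y → y ≤ max ay2 by2 →
      Bp (x, y)) :
    ∀ x y, min ax1 bx1 ≤ x → x ≤ max ax2 bx2 → min ay1 by1 ≤ y → y ≤ max ay2 by2 →
      I (x, y) := by
  -- bridge cell
  have hbr : I (bx1, ay2) := by
    refine h (bx1, ay2) (hB _ _ (by omega) (by omega) (by omega) (by omega))
      (ax2, ay2) (bx1, by1) ?_ ?_ ?_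
      (hB _ _ (by omega) (by omega) (by omega) (by omega))
      (hB _ _ (by omega) (by omega) (by omega) (by omega))
      (hIa _ _ (by omega) le_rfl (by omega) le_rfl)
      (hIb _ _ le_rfl (by omega) le_rfl (by omega))
    · intro he; rw [Prod.mk.injEq] at he; omega
    · rw [d1_mk]; omega
    · rw [d1_mk]; omega
  -- extend the bottom row of b
  have hrow : ∀ x, bx1 ≤ x → x ≤ bx2 → I (x, ay2) := by
    refine fill_row h bx1 bx2 bx1 ay2 by1 (by omega) le_rfl hbx
      (fun x a b => hB x ay2 (by omega) (by omega) (by omega) (by omega))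
      (fun x a b => hB x by1 (by omega) (by omega) (by omega) (by omega))
      (fun x a b => hIb x by1 a b le_rfl (by omega)) hbr
  -- now the extended b rectangle has y-range [ay2, by2], overlapping a's
  have hIb' : ∀ x y, bx1 ≤ x → x ≤ bx2 → ay2 ≤ y → y ≤ by2 → I (x, y) := by
    intro x y a b c d
    rcases eq_or_lt_of_le c with hc | hc
    · exact hc ▸ hrow x a b
    · exact hIb x y a b (by omega) d
  have := mergeA h ax1 ax2 ay1 ay2 bx1 bx2 ay2 by2 hax hay hbx (by omega)
    (by omega) (by omega) (by omega) hIa hIb'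
    (fun x y a b c d => hB x y a b (by omega) (by omega))
  intro x y a b c d
  exact this x y a b (by omega) (by omega)

/-- Diagonal corner-touching merge, second rectangle to the upper left. -/
lemma mergeC_ul {Bp I : ℤ × ℤ → Prop} (h : Clo Bp I) (ax1 ax2 ay1 ay2 bx1 bx2 by1 by2 : ℤ)
    (hax : ax1 ≤ ax2) (hay : ay1 ≤ ay2) (hbx : bx1 ≤ bx2) (hby : by1 ≤ by2)
    (hd1 : bx2 = ax1 - 1) (hd2 : by1 = ay2 + 1)
    (hIa : ∀ x y, ax1 ≤ x → x ≤ ax2 → ay1 ≤ y → y ≤ ay2 → I (x, y))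
    (hIb : ∀ x y, bx1 ≤ x → x ≤ bx2 → by1 ≤ y → y ≤ by2 → I (x, y))
    (hB : ∀ x y, min ax1 bx1 ≤ x → x ≤ max ax2 bx2 → min ay1 by1 ≤ y → y ≤ max ay2 by2 →
      Bp (x, y)) :
    ∀ x y, min ax1 bx1 ≤ x → x ≤ max ax2 bx2 → min ay1 by1 ≤ y → y ≤ max ay2 by2 →
      I (x, y) := by
  have h' := clo_negx h
  have key := mergeC_ur h' (-ax2) (-ax1) ay1 ay2 (-bx2) (-bx1) by1 by2
    (by omega) hay (by omega) hby (by omega) hd2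
    (fun x y a b c d => by simpa using hIa (-x) y (by omega) (by omega) c d)
    (fun x y a b c d => by simpa using hIb (-x) y (by omega) (by omega) c d)
    (fun x y a b c d => by
      simpa using hB (-x) y (by omega) (by omega) (by omega) (by omega))
  intro x y a b c d
  have := key (-x) y (by omega) (by omega) (by omega) (by omega)
  simpa using this

/-- Master merge lemma: two filled rectangles within `ℓ¹`-distance 2 fill their
bounding rectangle. -/
lemma mergeMain {Bp I : ℤ × ℤ → Prop} (h : Clo Bp I) (ax1 ax2 ay1 ay2 bx1 bx2 by1 by2 : ℤ)
    (hax : ax1 ≤ ax2) (hay : ay1 ≤ ay2) (hbx : bx1 ≤ bx2) (hby : by1 ≤ by2)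
    (p r : ℤ × ℤ) (hpa : ax1 ≤ p.1 ∧ p.1 ≤ ax2 ∧ ay1 ≤ p.2 ∧ p.2 ≤ ay2)
    (hrb : bx1 ≤ r.1 ∧ r.1 ≤ bx2 ∧ by1 ≤ r.2 ∧ r.2 ≤ by2)
    (hpr : d1 p r ≤ 2)
    (hIa : ∀ x y, ax1 ≤ x → x ≤ ax2 → ay1 ≤ y → y ≤ ay2 → I (x, y))
    (hIb : ∀ x y, bx1 ≤ x → x ≤ bx2 → by1 ≤ y → y ≤ by2 → I (x, y))
    (hB : ∀ x y, min ax1 bx1 ≤ x → x ≤ max ax2 bx2 → min ay1 by1 ≤ y → y ≤ max ay2 by2 →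
      Bp (x, y)) :
    ∀ x y, min ax1 bx1 ≤ x → x ≤ max ax2 bx2 → min ay1 by1 ≤ y → y ≤ max ay2 by2 →
      I (x, y) := by
  rw [d1] at hpr
  obtain ⟨hp1, hp2, hp3, hp4⟩ := hpa
  obtain ⟨hr1, hr2, hr3, hr4⟩ := hrb
  by_cases hyov : max ay1 by1 ≤ min ay2 by2
  · exact mergeA h ax1 ax2 ay1 ay2 bx1 bx2 by1 by2 hax hay hbx hby hyov
      (by omega) (by omega) hIa hIb hB
  by_cases hxov : max ax1 bx1 ≤ min ax2 bx2
  · -- swap coordinates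
    have h' := clo_swap h
    have key := mergeA h' ay1 ay2 ax1 ax2 by1 by2 bx1 bx2 hay hax hby hbx hxov
      (by omega) (by omega)
      (fun x y a b c d => by simpa using hIa y x c d a b)
      (fun x y a b c d => by simpa using hIb y x c d a b)
      (fun x y a b c d => by simpa using hB y x c d a b)
    intro x y a b c d
    simpa using key y x c d a b
  · -- diagonal cases
    have hcases : (bx1 = ax2 + 1 ∧ by1 = ay2 + 1) ∨ (ax1 = bx2 + 1 ∧ ay1 = by2 + 1) ∨
        (bx2 = ax1 - 1 ∧ by1 = ay2 + 1) ∨ (ax2 = bx1 - 1 ∧ ay1 = by2 + 1) := by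
      omega
    rcases hcases with ⟨h1, h2⟩ | ⟨h1, h2⟩ | ⟨h1, h2⟩ | ⟨h1, h2⟩
    · exact mergeC_ur h ax1 ax2 ay1 ay2 bx1 bx2 by1 by2 hax hay hbx hby h1 h2 hIa hIb hB
    · intro x y a b c d
      exact mergeC_ur h bx1 bx2 by1 by2 ax1 ax2 ay1 ay2 hbx hby hax hay h1 h2 hIb hIa
        (fun x y a b c d => hB x y (by omega) (by omega) (by omega) (by omega))
        x y (by omega) (by omega) (by omega) (by omega)
    · exact mergeC_ul h ax1 ax2 ay1 ay2 bx1 bx2 by1 by2 hax hay hbx hby h1 h2 hIa hIb hB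
    · intro x y a b c d
      exact mergeC_ul h bx1 bx2 by1 by2 ax1 ax2 ay1 ay2 hbx hby hax hay h1 h2 hIb hIa
        (fun x y a b c d => hB x y (by omega) (by omega) (by omega) (by omega))
        x y (by omega) (by omega) (by omega) (by omega)



noncomputable def cells (r : (ℤ × ℤ) × (ℤ × ℤ)) : Finset (ℤ × ℤ) := Finset.Icc r.1 r.2

def indic (S : Finset (ℤ × ℤ)) : ℤ × ℤ → Bool := fun v => decide (v ∈ S)

def rext (r : (ℤ × ℤ) × (ℤ × ℤ)) : ℤ := max (r.2.1 - r.1.1) (r.2.2 - r.1.2)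

def SpannedIn (B Z : Finset (ℤ × ℤ)) (r : (ℤ × ℤ) × (ℤ × ℤ)) : Prop :=
  ∀ w ∈ cells r, Infd B (indic (Z ∩ cells r)) w

def GoodR (B Z : Finset (ℤ × ℤ)) (r : (ℤ × ℤ) × (ℤ × ℤ)) : Prop :=
  r.1 ≤ r.2 ∧ cells r ⊆ B ∧ SpannedIn B Z r

def Hist (B Z : Finset (ℤ × ℤ)) (r : (ℤ × ℤ) × (ℤ × ℤ)) : Prop :=
  ∀ l : ℤ, 2 ≤ l → l ≤ rext r → ∃ r', GoodR B Z r' ∧ l ≤ rext r' ∧ rext r' ≤ 2 * l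

lemma mem_cells {r : (ℤ × ℤ) × (ℤ × ℤ)} {w : ℤ × ℤ} :
    w ∈ cells r ↔ r.1.1 ≤ w.1 ∧ w.1 ≤ r.2.1 ∧ r.1.2 ≤ w.2 ∧ w.2 ≤ r.2.2 := by
  simp [cells, Finset.mem_Icc, Prod.le_def]; tauto

lemma rect_conv {r : (ℤ × ℤ) × (ℤ × ℤ)} {v w1 w2 : ℤ × ℤ} (hne : w1 ≠ w2)
    (hd1 : d1 w1 v = 1) (hd2 : d1 w2 v = 1) (h1 : w1 ∈ cells r) (h2 : w2 ∈ cells r) :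
    v ∈ cells r := by
  rw [mem_cells] at h1 h2 ⊢
  rw [d1] at hd1 hd2
  have hne' : ¬(w1.1 = w2.1 ∧ w1.2 = w2.2) := fun hh => hne (Prod.ext hh.1 hh.2)
  omega

lemma clo_infd (B : Finset (ℤ × ℤ)) (σ : ℤ × ℤ → Bool) : Clo (· ∈ B) (Infd B σ) :=
  fun _ hv _ _ hne hd1 hd2 hb1 hb2 hi1 hi2 =>
    infd_of_two hv hne (mem_neighbors.mpr hd1) (mem_neighbors.mpr hd2) hb1 hb2 hi1 hi2

/-- The hull of two rectangles. -/
def hullR (r r' : (ℤ × ℤ) × (ℤ × ℤ)) : (ℤ × ℤ) × (ℤ × ℤ) :=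
  ((min r.1.1 r'.1.1, min r.1.2 r'.1.2), (max r.2.1 r'.2.1, max r.2.2 r'.2.2))

lemma spanned_mono {B Z : Finset (ℤ × ℤ)} {r h : (ℤ × ℤ) × (ℤ × ℤ)}
    (hsub : cells r ⊆ cells h) (hsp : SpannedIn B Z r) :
    ∀ w ∈ cells r, Infd B (indic (Z ∩ cells h)) w := by
  intro w hw
  refine infd_mono ?_ w (hsp w hw)
  intro v hv
  simp only [indic, decide_eq_true_eq, Finset.mem_inter] at hv ⊢
  exact ⟨hv.1, hsub hv.2⟩

lemma merge_spanned {B Z : Finset (ℤ × ℤ)} {r r' : (ℤ × ℤ) × (ℤ × ℤ)}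
    (hg : GoodR B Z r) (hg' : GoodR B Z r')
    {c c' : ℤ × ℤ} (hc : c ∈ cells r) (hc' : c' ∈ cells r') (hd : d1 c c' ≤ 2)
    (hB : cells (hullR r r') ⊆ B) :
    SpannedIn B Z (hullR r r') := by
  obtain ⟨hle, hsub, hsp⟩ := hg
  obtain ⟨hle', hsub', hsp'⟩ := hg'
  have hrsub : cells r ⊆ cells (hullR r r') := by
    intro w hw; rw [mem_cells] at hw ⊢; simp only [hullR]; omega
  have hrsub' : cells r' ⊆ cells (hullR r r') := by
    intro w hw; rw [mem_cells] at hw ⊢; simp only [hullR]; omega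
  have hIa := spanned_mono hrsub hsp
  have hIb := spanned_mono hrsub' hsp'
  rw [Prod.le_def] at hle hle'
  rw [mem_cells] at hc hc'
  have key := mergeMain (clo_infd B (indic (Z ∩ cells (hullR r r'))))
    r.1.1 r.2.1 r.1.2 r.2.2 r'.1.1 r'.2.1 r'.1.2 r'.2.2
    hle.1 hle.2 hle'.1 hle'.2 c c'
    ⟨hc.1, hc.2.1, hc.2.2.1, hc.2.2.2⟩ ⟨hc'.1, hc'.2.1, hc'.2.2.1, hc'.2.2.2⟩ hd
    (fun x y a b cc dd => hIa (x, y) (mem_cells.mpr ⟨a, b, cc, dd⟩))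
    (fun x y a b cc dd => hIb (x, y) (mem_cells.mpr ⟨a, b, cc, dd⟩))
    (fun x y a b cc dd => hB (mem_cells.mpr (by simp only [hullR]; exact ⟨a, b, cc, dd⟩)))
  intro w hw
  rw [mem_cells] at hw
  simp only [hullR] at hw
  have := key w.1 w.2 hw.1 hw.2.1 hw.2.2.1 hw.2.2.2
  simpa using this

/-- The rectangles process: starting from any collection of good rectangles covering `Z`,
one can reach a pairwise well-separated collection. -/
lemma process_aux (B Z : Finset (ℤ × ℤ)) (blo bhi : ℤ × ℤ) (hBbox : B = Finset.Icc blo bhi) :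
    ∀ n (T : Finset ((ℤ × ℤ) × (ℤ × ℤ))), T.card ≤ n →
    (∀ r ∈ T, GoodR B Z r ∧ Hist B Z r) → (∀ z ∈ Z, ∃ r ∈ T, z ∈ cells r) →
    ∃ T' : Finset ((ℤ × ℤ) × (ℤ × ℤ)),
      (∀ r ∈ T', GoodR B Z r ∧ Hist B Z r) ∧ (∀ z ∈ Z, ∃ r ∈ T', z ∈ cells r) ∧
      (∀ r ∈ T', ∀ r' ∈ T', r ≠ r' → ∀ c ∈ cells r, ∀ c' ∈ cells r', 3 ≤ d1 c c') := by
  intro n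
  induction n with
  | zero =>
    intro T hT hgood hcov
    refine ⟨T, hgood, hcov, ?_⟩
    intro r hr
    have : T = ∅ := Finset.card_eq_zero.mp (by omega)
    simp [this] at hr
  | succ n ih =>
    intro T hT hgood hcov
    by_cases hsep : ∀ r ∈ T, ∀ r' ∈ T, r ≠ r' → ∀ c ∈ cells r, ∀ c' ∈ cells r', 3 ≤ d1 c c'
    · exact ⟨T, hgood, hcov, hsep⟩
    · push_neg at hsep
      obtain ⟨r, hr, r', hr', hne, c, hc, c', hc', hdlt⟩ := hsep
      have hd : d1 c c' ≤ 2 := by omega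
      set hl := hullR r r' with hhl
      -- hull is inside the box B
      have hgr := (hgood r hr).1
      have hgr' := (hgood r' hr').1
      have hcorner : ∀ rr : (ℤ × ℤ) × (ℤ × ℤ), GoodR B Z rr →
          blo.1 ≤ rr.1.1 ∧ blo.2 ≤ rr.1.2 ∧ rr.2.1 ≤ bhi.1 ∧ rr.2.2 ≤ bhi.2 := by
        intro rr hgg
        have h1 : rr.1 ∈ cells rr := by
          rw [mem_cells]
          have := hgg.1; rw [Prod.le_def] at this; omega
        have h2 : rr.2 ∈ cells rr := by
          rw [mem_cells]
          have := hgg.1; rw [Prod.le_def] at this; omega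
        have hb1 := hgg.2.1 h1
        have hb2 := hgg.2.1 h2
        rw [hBbox, Finset.mem_Icc, Prod.le_def, Prod.le_def] at hb1 hb2
        exact ⟨hb1.1.1, hb1.1.2, hb2.2.1, hb2.2.2⟩
      have hcor := hcorner r hgr
      have hcor' := hcorner r' hgr'
      have hhlB : cells hl ⊆ B := by
        intro w hw
        rw [mem_cells] at hw
        simp only [hhl, hullR] at hw
        rw [hBbox, Finset.mem_Icc, Prod.le_def, Prod.le_def]
        constructor
        · constructor <;> omega
        · constructor <;> omega
      have hle : hl.1 ≤ hl.2 := by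
        have := hgr.1; have := hgr'.1
        rw [Prod.le_def] at *
        simp only [hhl, hullR]
        constructor <;> simp <;> omega
      have hsp : SpannedIn B Z hl := merge_spanned hgr hgr' hc hc' hd hhlB
      have hgood_hl : GoodR B Z hl := ⟨hle, hhlB, hsp⟩
      -- history for the hull
      have hext : rext hl ≤ rext r + rext r' + 2 := by
        rw [mem_cells] at hc hc'
        rw [d1] at hd
        simp only [hhl, hullR, rext] at *
        omega
      have hhist_hl : Hist B Z hl := by
        intro l hl2 hlle
        rcases le_or_gt l (rext r) with hcase | hcase
        · exact (hgood r hr).2 l hl2 hcase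
        rcases le_or_gt l (rext r') with hcase' | hcase'
        · exact (hgood r' hr').2 l hl2 hcase'
        · exact ⟨hl, hgood_hl, hlle, by omega⟩
      -- new collection
      set T2 := insert hl ((T.erase r).erase r') with hT2
      have hcard : T2.card ≤ n := by
        rw [hT2]
        have h1 : r' ∈ T.erase r := Finset.mem_erase.mpr ⟨fun hh => hne hh.symm, hr'⟩
        have h2 := Finset.card_erase_of_mem h1
        have h3 := Finset.card_erase_of_mem hr
        have h4 := Finset.card_insert_le hl ((T.erase r).erase r')
        have h5 : 1 ≤ T.card := Finset.card_pos.mpr ⟨r, hr⟩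
        have h6 : 1 ≤ (T.erase r).card := Finset.card_pos.mpr ⟨r', h1⟩
        omega
      refine ih T2 hcard ?_ ?_
      · intro rr hrr
        rcases Finset.mem_insert.mp hrr with hh | hh
        · exact hh ▸ ⟨hgood_hl, hhist_hl⟩
        · exact hgood rr (Finset.mem_of_mem_erase (Finset.mem_of_mem_erase hh))
      · intro z hz
        obtain ⟨rr, hrr, hzr⟩ := hcov z hz
        by_cases hcase : rr = r ∨ rr = r'
        · refine ⟨hl, Finset.mem_insert_self _ _, ?_⟩
          rcases hcase with hh | hh
          · subst hh
            rw [mem_cells] at hzr ⊢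
            simp only [hhl, hullR]; omega
          · subst hh
            rw [mem_cells] at hzr ⊢
            simp only [hhl, hullR]; omega
        · push_neg at hcase
          exact ⟨rr, Finset.mem_insert_of_mem (Finset.mem_erase.mpr ⟨hcase.2,
            Finset.mem_erase.mpr ⟨hcase.1, hrr⟩⟩), hzr⟩

/-- Full process: from the initial sites we obtain a separated collection of spanned
rectangles with history, covering `Z`. -/
lemma process (B Z : Finset (ℤ × ℤ)) (blo bhi : ℤ × ℤ) (hBbox : B = Finset.Icc blo bhi)
    (hZ : Z ⊆ B) :
    ∃ T' : Finset ((ℤ × ℤ) × (ℤ × ℤ)),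
      (∀ r ∈ T', GoodR B Z r ∧ Hist B Z r) ∧ (∀ z ∈ Z, ∃ r ∈ T', z ∈ cells r) ∧
      (∀ r ∈ T', ∀ r' ∈ T', r ≠ r' → ∀ c ∈ cells r, ∀ c' ∈ cells r', 3 ≤ d1 c c') := by
  apply process_aux B Z blo bhi hBbox Z.card (Z.image (fun z => (z, z)))
    Finset.card_image_le
  · intro r hr
    obtain ⟨z, hz, hzr⟩ := Finset.mem_image.mp hr
    subst hzr
    have hcz : cells (z, z) = {z} := by simp [cells]
    refine ⟨⟨le_rfl, ?_, ?_⟩, ?_⟩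
    · rw [hcz]; intro w hw; rw [Finset.mem_singleton] at hw; exact hw ▸ hZ hz
    · intro w hw
      rw [hcz, Finset.mem_singleton] at hw
      apply infd_of_start
      simp only [indic, decide_eq_true_eq, Finset.mem_inter, hcz, Finset.mem_singleton]
      exact ⟨hw ▸ hz, hw⟩
    · intro l hl2 hlle
      simp only [rext] at hlle
      omega
  · intro z hz
    refine ⟨(z, z), Finset.mem_image_of_mem _ hz, ?_⟩
    simp [cells]



lemma double_col {B Z : Finset (ℤ × ℤ)} {r : (ℤ × ℤ) × (ℤ × ℤ)}
    (hle : r.1 ≤ r.2) (hsp : SpannedIn B Z r) {c : ℤ}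
    (hc1 : r.1.1 ≤ c) (hc2 : c + 1 ≤ r.2.1) :
    ∃ z ∈ Z ∩ cells r, z.1 = c ∨ z.1 = c + 1 := by
  by_contra hcon
  push_neg at hcon
  have key : ∀ v, Infd B (indic (Z ∩ cells r)) v →
      (v ∈ cells r ∧ v.1 ≠ c ∧ v.1 ≠ c + 1) := by
    apply infd_induction
    · intro v hv
      simp only [indic, decide_eq_true_eq] at hv
      have h2 := hcon v hv
      exact ⟨(Finset.mem_inter.mp hv).2, h2.1, h2.2⟩
    · intro v hvB w1 w2 hne h1 h2 h1B h2B hP1 hP2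
      have hd1 := mem_neighbors.mp h1
      have hd2 := mem_neighbors.mp h2
      have hvc : v ∈ cells r := rect_conv hne hd1 hd2 hP1.1 hP2.1
      refine ⟨hvc, ?_, ?_⟩
      · intro hh
        rw [d1] at hd1 hd2
        apply hne
        have e1 : w1.1 = c - 1 := by omega
        have e2 : w2.1 = c - 1 := by omega
        have e3 : w1.2 = v.2 := by omega
        have e4 : w2.2 = v.2 := by omega
        exact Prod.ext (by omega) (by omega)
      · intro hh
        rw [d1] at hd1 hd2
        apply hne
        have e1 : w1.1 = c + 2 := by omega
        have e2 : w2.1 = c + 2 := by omega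
        exact Prod.ext (by omega) (by omega)
  have hcell : (c, r.1.2) ∈ cells r := by
    rw [mem_cells]
    rw [Prod.le_def] at hle
    simp only
    omega
  have := key (c, r.1.2) (hsp _ hcell)
  exact this.2.1 rfl

lemma double_row {B Z : Finset (ℤ × ℤ)} {r : (ℤ × ℤ) × (ℤ × ℤ)}
    (hle : r.1 ≤ r.2) (hsp : SpannedIn B Z r) {c : ℤ}
    (hc1 : r.1.2 ≤ c) (hc2 : c + 1 ≤ r.2.2) :
    ∃ z ∈ Z ∩ cells r, z.2 = c ∨ z.2 = c + 1 := by
  by_contra hcon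
  push_neg at hcon
  have key : ∀ v, Infd B (indic (Z ∩ cells r)) v →
      (v ∈ cells r ∧ v.2 ≠ c ∧ v.2 ≠ c + 1) := by
    apply infd_induction
    · intro v hv
      simp only [indic, decide_eq_true_eq] at hv
      have h2 := hcon v hv
      exact ⟨(Finset.mem_inter.mp hv).2, h2.1, h2.2⟩
    · intro v hvB w1 w2 hne h1 h2 h1B h2B hP1 hP2
      have hd1 := mem_neighbors.mp h1
      have hd2 := mem_neighbors.mp h2
      have hvc : v ∈ cells r := rect_conv hne hd1 hd2 hP1.1 hP2.1
      refine ⟨hvc, ?_, ?_⟩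
      · intro hh
        rw [d1] at hd1 hd2
        apply hne
        exact Prod.ext (by omega) (by omega)
      · intro hh
        rw [d1] at hd1 hd2
        apply hne
        exact Prod.ext (by omega) (by omega)
  have hcell : (r.1.1, c) ∈ cells r := by
    rw [mem_cells]
    rw [Prod.le_def] at hle
    simp only
    omega
  have := key (r.1.1, c) (hsp _ hcell)
  exact this.2.1 rfl



lemma extract (s : ℕ) (hs : 1 ≤ s) (blo bhi : ℤ × ℤ) (σ : ℤ × ℤ → Bool)
    (C : Finset (ℤ × ℤ)) (hCB : C ⊆ Finset.Icc blo bhi) (hconn : ConnectedIn C)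
    (hfin : ∀ v ∈ C, bfinal (Finset.Icc blo bhi) σ v = true)
    (u v : ℤ × ℤ) (hu : u ∈ C) (hv : v ∈ C)
    (hd : 16 * s < max (u.1 - v.1).natAbs (u.2 - v.2).natAbs) :
    ∃ v0 : ℤ × ℤ, v0 ∈ Finset.Icc blo bhi ∧ ∃ S : Finset (ℤ × ℤ),
      S ⊆ Finset.Icc v0 (v0.1 + 32 * s, v0.2 + 32 * s) ∧ S.card = 8 * s ∧
      ∀ z ∈ S, σ z = true := by
  set B := Finset.Icc blo bhi with hB
  set Z := B.filter (fun w => σ w = true) with hZdef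
  have hZ : Z ⊆ B := Finset.filter_subset _ _
  obtain ⟨T, hgood, hcov, hsep⟩ := process B Z blo bhi hB hZ
  have hcover : ∀ w, Infd B σ w → w ∈ B → ∃ rr ∈ T, w ∈ cells rr := by
    apply infd_induction (P := fun w => w ∈ B → ∃ rr ∈ T, w ∈ cells rr)
    · intro w hw hwB
      exact hcov w (Finset.mem_filter.mpr ⟨hwB, hw⟩)
    · intro vv hvB w1 w2 hne h1 h2 h1B h2B hP1 hP2 _
      obtain ⟨r1, hr1, hw1⟩ := hP1 h1B
      obtain ⟨r2, hr2, hw2⟩ := hP2 h2B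
      by_cases he : r1 = r2
      · subst he
        exact ⟨r1, hr1, rect_conv hne (mem_neighbors.mp h1) (mem_neighbors.mp h2) hw1 hw2⟩
      · exfalso
        have hs3 := hsep r1 hr1 r2 hr2 he w1 hw1 w2 hw2
        have hd1' := mem_neighbors.mp h1
        have hd2' := mem_neighbors.mp h2
        rw [d1] at hs3 hd1' hd2'
        omega
  have huB := hCB hu
  obtain ⟨ru, hru, huru⟩ := hcover u (hfin u hu) huB
  -- every chain from u stays in ru
  have hchain : ∀ (l : List (ℤ × ℤ)) (w0 : ℤ × ℤ), w0 ∈ cells ru → (∀ w ∈ l, w ∈ C) →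
      List.Chain Adj w0 l → ∀ w ∈ w0 :: l, w ∈ cells ru := by
    intro l
    induction l with
    | nil =>
      intro w0 h0 _ _ w hw
      simp only [List.mem_singleton] at hw
      exact hw ▸ h0
    | cons a t ih =>
      intro w0 h0 hC hch w hw
      rcases List.chain_cons.mp hch with ⟨hadj, hch'⟩
      have haC : a ∈ C := hC a (by simp)
      obtain ⟨ra, hra, hara⟩ := hcover a (hfin a haC) (hCB haC)
      have hra_eq : ra = ru := by
        by_contra hnee
        have hs3 := hsep ru hru ra hra (fun hh => hnee hh.symm) w0 h0 a hara
        have : d1 w0 a = 1 := hadj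
        omega
      subst hra_eq
      rcases List.mem_cons.mp hw with hw | hw
      · exact hw ▸ h0
      · exact ih a hara (fun x hx => hC x (by simp [hx])) hch' w hw
  obtain ⟨l, hlC, hlch, hllast⟩ := hconn u hu v hv
  have hvru : v ∈ cells ru := by
    have hmem : (u :: l).getLast (by simp) ∈ u :: l := List.getLast_mem _
    exact hchain l u huru hlC hlch _ (hllast ▸ hmem)
  -- size of ru
  have hru_good := (hgood ru hru).1
  have hext : 16 * (s : ℤ) < rext ru := by
    rw [mem_cells] at huru hvru
    simp only [rext]
    omega
  obtain ⟨r', hg', hext1, hext2⟩ := (hgood ru hru).2 (16 * s) (by omega) (le_of_lt hext)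
  obtain ⟨hle', hsub', hsp'⟩ := hg'
  have hle'' := hle'
  rw [Prod.le_def] at hle''
  have hdims : r'.2.1 - r'.1.1 ≤ 32 * (s : ℤ) ∧ r'.2.2 - r'.1.2 ≤ 32 * (s : ℤ) := by
    simp only [rext] at hext2
    omega
  have hv0B : r'.1 ∈ B := hsub' (mem_cells.mpr (by omega))
  have hfin_common : ∀ (f : Fin (8 * s) → ℤ × ℤ),
      (∀ k, f k ∈ Z ∩ cells r') → Function.Injective f →
      ∃ v0 : ℤ × ℤ, v0 ∈ Finset.Icc blo bhi ∧ ∃ S : Finset (ℤ × ℤ),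
        S ⊆ Finset.Icc v0 (v0.1 + 32 * s, v0.2 + 32 * s) ∧ S.card = 8 * s ∧
        ∀ z ∈ S, σ z = true := by
    intro f hf hinj
    refine ⟨r'.1, hv0B, Finset.univ.image f, ?_, ?_, ?_⟩
    · intro z hz
      obtain ⟨k, _, hk⟩ := Finset.mem_image.mp hz
      have hzc := (Finset.mem_inter.mp (hf k)).2
      rw [mem_cells] at hzc
      rw [Finset.mem_Icc, Prod.le_def, Prod.le_def]
      subst hk
      refine ⟨⟨by omega, by omega⟩, ?_, ?_⟩
      · show (f k).1 ≤ r'.1.1 + 32 * (s : ℤ)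
        omega
      · show (f k).2 ≤ r'.1.2 + 32 * (s : ℤ)
        omega
    · rw [Finset.card_image_of_injective _ hinj, Finset.card_univ, Fintype.card_fin]
    · intro z hz
      obtain ⟨k, _, hk⟩ := Finset.mem_image.mp hz
      have hzZ := (Finset.mem_inter.mp (hf k)).1
      rw [hZdef, Finset.mem_filter] at hzZ
      exact hk ▸ hzZ.2
  rcases le_or_gt (16 * (s : ℤ)) (r'.2.1 - r'.1.1) with hx | hx
  · -- use columns
    have hpairs : ∀ k : Fin (8 * s), ∃ z, z ∈ Z ∩ cells r' ∧
        (z.1 = r'.1.1 + 2 * (k : ℕ) ∨ z.1 = r'.1.1 + 2 * (k : ℕ) + 1) := by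
      intro k
      have hk : (k : ℕ) < 8 * s := k.2
      obtain ⟨z, hz, hzc⟩ := double_col hle' hsp' (c := r'.1.1 + 2 * (k : ℕ))
        (by omega) (by omega)
      exact ⟨z, hz, by omega⟩
    choose f hf1 hf2 using hpairs
    apply hfin_common f hf1
    intro k1 k2 he
    have h1 := hf2 k1
    have h2 := hf2 k2
    rw [he] at h1
    apply Fin.ext
    omega
  · -- use rows
    have hy : 16 * (s : ℤ) ≤ r'.2.2 - r'.1.2 := by
      simp only [rext] at hext1
      omega
    have hpairs : ∀ k : Fin (8 * s), ∃ z, z ∈ Z ∩ cells r' ∧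
        (z.2 = r'.1.2 + 2 * (k : ℕ) ∨ z.2 = r'.1.2 + 2 * (k : ℕ) + 1) := by
      intro k
      have hk : (k : ℕ) < 8 * s := k.2
      obtain ⟨z, hz, hzc⟩ := double_row hle' hsp' (c := r'.1.2 + 2 * (k : ℕ))
        (by omega) (by omega)
      exact ⟨z, hz, by omega⟩
    choose f hf1 hf2 using hpairs
    apply hfin_common f hf1
    intro k1 k2 he
    have h1 := hf2 k1
    have h2 := hf2 k2
    rw [he] at h1
    apply Fin.ext
    omega


end BP

open scoped ENNReal

/-- With i.i.d. initial 2s of density `q` performing threshold-2 bootstrap percolation on 1s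
internal to `[-⌊q^{-s}⌋, ⌊q^{-s}⌋]²`, with probability at least `1 - c₀ q^s` every connected
set of final state-2 vertices has `ℓ∞`-diameter at most `16s`. -/
theorem stmt13 (s : ℕ) (hs : 1 ≤ s) :
    ∃ c0 : ℝ, 0 < c0 ∧ ∃ q0 : ℝ, 0 < q0 ∧ ∀ q : ℝ, 0 < q → q < q0 →
      ∀ (Ω : Type) [MeasurableSpace Ω] (μ : Measure Ω) [IsProbabilityMeasure μ]
        (X : ℤ × ℤ → Ω → Bool),
        iIndepFun X μ →
        (∀ v, μ {ω | X v ω = true} = ENNReal.ofReal q) →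
        1 - ENNReal.ofReal (c0 * q ^ s) ≤
          μ {ω | ∀ C : Finset (ℤ × ℤ), C ⊆ boxA s q → ConnectedIn C →
            (∀ v ∈ C, bfinal (boxA s q) (fun w => X w ω) v = true) →
            ∀ u ∈ C, ∀ v ∈ C,
              max (u.1 - v.1).natAbs (u.2 - v.2).natAbs ≤ 16 * s} := by
  classical
  set K : ℕ := ((32 * s + 1) ^ 2).choose (8 * s) with hK
  refine ⟨9 * K + 1, by positivity, 1/2, by norm_num, ?_⟩
  intro q hq0 hq1 Ω _ μ _ X hind hprob
  -- basic facts about the box size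
  have hq1' : q ≤ 1 := by linarith
  have hqi2 : (2 : ℝ) ≤ q⁻¹ := by
    rw [show (2:ℝ) = (1/2)⁻¹ by norm_num]
    exact inv_anti₀ hq0 hq1.le
  have hqi1 : (1 : ℝ) ≤ q⁻¹ ^ s := one_le_pow₀ (by linarith : (1:ℝ) ≤ q⁻¹)
  set m : ℤ := ⌊q⁻¹ ^ s⌋ with hm
  have hm1 : 1 ≤ m := by
    rw [hm]
    exact_mod_cast Int.le_floor.mpr (by exact_mod_cast hqi1)
  have hm_le : (m : ℝ) ≤ q⁻¹ ^ s := Int.floor_le _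
  set B : Finset (ℤ × ℤ) := boxA s q with hBdef
  have hBbox : B = Finset.Icc ((-m, -m) : ℤ × ℤ) ((m, m) : ℤ × ℤ) := rfl
  -- the family of events
  set pc : ℤ × ℤ → Finset (Finset (ℤ × ℤ)) := fun v0 =>
    (Finset.Icc v0 (v0.1 + 32 * s, v0.2 + 32 * s)).powersetCard (8 * s) with hpc
  set E : Finset (ℤ × ℤ) → Set Ω := fun S => ⋂ z ∈ S, X z ⁻¹' {true} with hE
  set G : Set Ω := {ω | ∀ C : Finset (ℤ × ℤ), C ⊆ boxA s q → ConnectedIn C →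
    (∀ v ∈ C, bfinal (boxA s q) (fun w => X w ω) v = true) →
    ∀ u ∈ C, ∀ v ∈ C, max (u.1 - v.1).natAbs (u.2 - v.2).natAbs ≤ 16 * s} with hG
  -- the bad event is covered by the union
  have hGc : Gᶜ ⊆ ⋃ v0 ∈ B, ⋃ S ∈ pc v0, E S := by
    intro ω hω
    simp only [hG, Set.mem_compl_iff, Set.mem_setOf_eq] at hω
    push_neg at hω
    obtain ⟨C, hC1, hC2, hC3, u, hu, v, hv, hd⟩ := hω
    obtain ⟨v0, hv0, S, hS1, hS2, hS3⟩ := BP.extract s hs (-m, -m) (m, m)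
      (fun w => X w ω) C hC1 hC2 hC3 u v hu hv (by omega)
    have hv0B : v0 ∈ B := by rw [hBbox]; exact hv0
    refine Set.mem_biUnion hv0B ?_
    refine Set.mem_biUnion (show S ∈ pc v0 from Finset.mem_powersetCard.mpr ⟨hS1, hS2⟩) ?_
    rw [hE]
    simp only [Set.mem_iInter, Set.mem_preimage, Set.mem_singleton_iff]
    exact fun z hz => hS3 z hz
  -- measure of an intersection event
  have hES : ∀ S : Finset (ℤ × ℤ), μ (E S) = ENNReal.ofReal q ^ S.card := by
    intro S
    have hmeas : ∀ i : ℤ × ℤ, i ∈ S → MeasurableSet[(inferInstance : MeasurableSpace Bool)]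
        ({true} : Set Bool) := fun i _ => trivial
    have h1 := hind.measure_inter_preimage_eq_mul S (sets := fun _ => ({true} : Set Bool))
      hmeas
    rw [hE]
    simp only
    rw [h1]
    have h2 : ∀ z : ℤ × ℤ, X z ⁻¹' {true} = {ω | X z ω = true} := by
      intro z; ext ω; simp
    calc ∏ i ∈ S, μ (X i ⁻¹' {true}) = ∏ i ∈ S, ENNReal.ofReal q := by
          refine Finset.prod_congr rfl fun i _ => ?_
          rw [h2 i, hprob i]
      _ = ENNReal.ofReal q ^ S.card := Finset.prod_const _
  -- union bound
  have hbad : μ Gᶜ ≤ (B.card : ℝ≥0∞) * (K : ℝ≥0∞) * ENNReal.ofReal q ^ (8 * s) := by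
    have hpcc : ∀ v0 : ℤ × ℤ, (pc v0).card = K := by
      intro v0
      rw [hpc]
      simp only
      rw [Finset.card_powersetCard, Finset.card_Icc_prod]
      simp only [Int.card_Icc]
      congr 1
      have e1 : (v0.1 + 32 * (s:ℤ) + 1 - v0.1).toNat = 32 * s + 1 := by omega
      have e2 : (v0.2 + 32 * (s:ℤ) + 1 - v0.2).toNat = 32 * s + 1 := by omega
      rw [e1, e2]
      ring
    calc μ Gᶜ ≤ μ (⋃ v0 ∈ B, ⋃ S ∈ pc v0, E S) := measure_mono hGc
      _ ≤ ∑ v0 ∈ B, μ (⋃ S ∈ pc v0, E S) := measure_biUnion_finset_le B _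
      _ ≤ ∑ v0 ∈ B, ∑ S ∈ pc v0, μ (E S) := by
          refine Finset.sum_le_sum fun v0 _ => ?_
          exact measure_biUnion_finset_le (pc v0) _
      _ = ∑ v0 ∈ B, ∑ S ∈ pc v0, ENNReal.ofReal q ^ (8 * s) := by
          refine Finset.sum_congr rfl fun v0 _ => Finset.sum_congr rfl fun S hS => ?_
          rw [hES S, (Finset.mem_powersetCard.mp hS).2]
      _ = (B.card : ℝ≥0∞) * (K : ℝ≥0∞) * ENNReal.ofReal q ^ (8 * s) := by
          simp only [Finset.sum_const, hpcc, nsmul_eq_mul, mul_assoc]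
  -- numeric estimate
  have hcardB : (B.card : ℝ) ≤ 9 * (q⁻¹ ^ s) ^ 2 := by
    have h1 : B.card = ((m + 1 - (-m)).toNat) * ((m + 1 - (-m)).toNat) := by
      rw [hBbox, Finset.card_Icc_prod]
      simp only [Int.card_Icc]
    have h2 : ((m + 1 - (-m)).toNat : ℝ) = 2 * (m : ℝ) + 1 := by
      have hnn : (0:ℤ) ≤ m + 1 - (-m) := by omega
      have h2' : ((m + 1 - (-m)).toNat : ℤ) = m + 1 - (-m) := Int.toNat_of_nonneg hnn
      have h2'' : ((m + 1 - (-m)).toNat : ℝ) = ((m + 1 - (-m) : ℤ) : ℝ) := by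
        exact_mod_cast congrArg (fun z : ℤ => (z : ℝ)) h2'
      rw [h2'']
      push_cast
      ring
    have h3 : 2 * (m:ℝ) + 1 ≤ 3 * q⁻¹ ^ s := by nlinarith
    rw [h1]
    push_cast
    rw [h2]
    nlinarith [hqi1]
  have hq6 : (q⁻¹ ^ s) ^ 2 * q ^ (8 * s) = q ^ (6 * s) := by
    have hsplit : q ^ (8 * s) = q ^ (2 * s) * q ^ (6 * s) := by
      rw [← pow_add]; congr 1; ring
    rw [hsplit, ← pow_mul, show s * 2 = 2 * s by ring, inv_pow, ← mul_assoc,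
      inv_mul_cancel₀ (pow_ne_zero _ (ne_of_gt hq0)), one_mul]
  have hnum : (B.card : ℝ) * K * q ^ (8 * s) ≤ (9 * K + 1) * q ^ s := by
    have h4 : (B.card : ℝ) * K * q ^ (8 * s) ≤ 9 * (q⁻¹ ^ s) ^ 2 * K * q ^ (8*s) := by
      have : (0:ℝ) ≤ (K : ℝ) * q ^ (8*s) := by positivity
      nlinarith [pow_nonneg hq0.le (8*s)]
    have h5 : 9 * (q⁻¹ ^ s) ^ 2 * K * q ^ (8*s) = 9 * K * q ^ (6 * s) := by
      calc 9 * (q⁻¹ ^ s) ^ 2 * (K:ℝ) * q ^ (8*s)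
          = 9 * (K:ℝ) * ((q⁻¹ ^ s) ^ 2 * q ^ (8*s)) := by ring
        _ = 9 * (K:ℝ) * q ^ (6*s) := by rw [hq6]
    have h6 : q ^ (6 * s) ≤ q ^ s :=
      pow_le_pow_of_le_one hq0.le hq1' (by omega)
    have h7 : (9:ℝ) * K * q ^ (6*s) ≤ 9 * K * q ^ s := by
      have : (0:ℝ) ≤ 9 * K := by positivity
      nlinarith
    have h8 : (9:ℝ) * K * q ^ s ≤ (9 * K + 1) * q ^ s := by
      have : (0:ℝ) ≤ q ^ s := by positivity
      nlinarith
    linarith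
  -- assemble in ℝ≥0∞
  have hconv : (B.card : ℝ≥0∞) * (K : ℝ≥0∞) * ENNReal.ofReal q ^ (8 * s) ≤
      ENNReal.ofReal ((9 * K + 1) * q ^ s) := by
    rw [← ENNReal.ofReal_pow hq0.le]
    rw [show ((B.card : ℝ≥0∞)) = ENNReal.ofReal (B.card : ℝ) by
      rw [ENNReal.ofReal_natCast]]
    rw [show ((K : ℝ≥0∞)) = ENNReal.ofReal (K : ℝ) by rw [ENNReal.ofReal_natCast]]
    rw [← ENNReal.ofReal_mul (by positivity), ← ENNReal.ofReal_mul (by positivity)]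
    exact ENNReal.ofReal_le_ofReal hnum
  have hbad2 : μ Gᶜ ≤ ENNReal.ofReal ((9 * ↑K + 1) * q ^ s) := hbad.trans hconv
  have huniv : (1 : ℝ≥0∞) ≤ μ G + μ Gᶜ := by
    have h1 := measure_union_le G Gᶜ (μ := μ)
    rw [Set.union_compl_self] at h1
    rw [measure_univ] at h1
    exact h1
  calc (1 : ℝ≥0∞) - ENNReal.ofReal ((9 * ↑K + 1) * q ^ s)
      ≤ 1 - μ Gᶜ := tsub_le_tsub_left hbad2 1
    _ ≤ μ G := tsub_le_iff_right.mpr huniv
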